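/- For f ∈ B_σ, any real x_i, any interval [x_i, x_{i+1}] of length at most δ, and any integer l ≥ 0, ∫_{x_i}^{x_{i+1}} |f⁽ˡ⁾(x_i)|² dx ≤ e^{δ²} Σ_{ν=0}^∞ ∫_{x_i}^{x_{i+1}} |f^{(l+ν)}(x)|²/ν! dx. -/

import Mathlib

open Real Set MeasureTheory ENNReal NNReal

/-- `F` is an entire function of exponential type at most `σ`. -/
def HasExpTypeLE (σ : ℝ) (F : ℂ → ℂ) : Prop :=
  ∀ ε > 0, ∃ C > 0, ∀ z : ℂ, ‖F z‖ ≤ C * Real.exp ((σ + ε) * ‖z‖)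

/-- Paley–Wiener description of the space `B_σ` of `σ`-band-limited functions. -/
def BandLimited (σ : ℝ) (F : ℂ → ℂ) : Prop :=
  Differentiable ℂ F ∧ HasExpTypeLE σ F ∧ MemLp (fun x : ℝ => F x) 2 volume

/-- Iterated derivatives of the restriction to `ℝ` agree with complex iterated derivatives. -/
lemma iteratedDeriv_comp_ofReal_entire {G : ℂ → ℂ} (hG : Differentiable ℂ G) (n : ℕ) (x : ℝ) :
    iteratedDeriv n (fun t : ℝ => G t) x = iteratedDeriv n G x := by
  induction n generalizing G with
  | zero => simp
  | succ n ih =>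
    have hd : Differentiable ℂ (deriv G) :=
      ((contDiff_infty_iff_deriv.mp (hG.contDiff)).2).differentiable (by simp)
    rw [iteratedDeriv_succ', iteratedDeriv_succ']
    have hre : deriv (fun t : ℝ => G t) = fun t : ℝ => deriv G t := by
      funext t
      exact ((hG t).hasDerivAt.comp_ofReal).deriv
    rw [hre]
    exact ih hd

/-- Cauchy–Schwarz for `ℝ≥0∞`-valued series. -/
lemma ennreal_cauchy_schwarz_tsum (a b : ℕ → ℝ≥0∞) :
    (∑' n, a n * b n) ^ 2 ≤ (∑' n, a n ^ 2) * (∑' n, b n ^ 2) := by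
  have hpq : Real.HolderConjugate 2 2 := by
    rw [Real.holderConjugate_iff]; norm_num
  have h := ENNReal.lintegral_mul_le_Lp_mul_Lq (Measure.count : Measure ℕ) hpq
    (f := a) (g := b) (measurable_from_nat (f := a)).aemeasurable
    (measurable_from_nat (f := b)).aemeasurable
  rw [lintegral_count] at h
  simp only [Pi.mul_apply] at h
  have h2 : (∑' n, a n * b n) ^ 2 ≤
      ((∫⁻ n, a n ^ (2 : ℝ) ∂Measure.count) ^ (1 / 2 : ℝ) *
        (∫⁻ n, b n ^ (2 : ℝ) ∂Measure.count) ^ (1 / 2 : ℝ)) ^ 2 :=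
    pow_le_pow_left' h 2
  refine h2.trans_eq ?_
  rw [mul_pow]
  have hsq : ∀ x : ℝ≥0∞, (x ^ (1 / 2 : ℝ)) ^ (2 : ℕ) = x := by
    intro x
    rw [← ENNReal.rpow_natCast (x ^ (1 / 2 : ℝ)) 2, ← ENNReal.rpow_mul]
    norm_num
  rw [hsq, hsq, lintegral_count, lintegral_count]
  congr 1 <;> exact tsum_congr fun n => by rw [← ENNReal.rpow_natCast]; norm_num

/-- Pointwise key estimate: Taylor expansion + Cauchy--Schwarz. -/
lemma pointwise_key {G : ℂ → ℂ} (hG : Differentiable ℂ G) (x t : ℝ) :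
    ((‖G x‖₊ : ℝ≥0∞)) ^ 2 ≤ ENNReal.ofReal (Real.exp ((x - t) ^ 2)) *
      ∑' ν : ℕ, ((‖iteratedDeriv ν G t‖₊ : ℝ≥0∞)) ^ 2 / (ν.factorial : ℝ≥0∞) := by
  set r : ℝ := |x - t| with hr
  have hr0 : 0 ≤ r := abs_nonneg _
  set v : ℕ → ℝ := fun n => ‖iteratedDeriv n G t‖ with hv
  have hv0 : ∀ n, 0 ≤ v n := fun n => norm_nonneg _
  have hsqrt : ∀ n : ℕ, 0 < Real.sqrt n.factorial := fun n =>
    Real.sqrt_pos.mpr (by exact_mod_cast n.factorial_pos)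
  set a : ℕ → ℝ≥0∞ := fun n => ENNReal.ofReal (r ^ n / Real.sqrt n.factorial) with ha
  set b : ℕ → ℝ≥0∞ := fun n => ENNReal.ofReal (v n / Real.sqrt n.factorial) with hb
  set φ : ℕ → ℂ := fun n => (n.factorial : ℂ)⁻¹ • ((x : ℂ) - (t : ℂ)) ^ n • iteratedDeriv n G t
    with hφdef
  have hφ : HasSum φ (G x) := Complex.hasSum_taylorSeries_of_entire hG t x
  have hterm : ∀ n : ℕ, (‖φ n‖₊ : ℝ≥0∞) = a n * b n := by
    intro n
    rw [ha, hb]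
    simp only
    rw [← ENNReal.ofReal_mul (by positivity), ← (ofReal_norm _).trans (enorm_eq_nnnorm _)]
    congr 1
    rw [hφdef]
    simp only
    rw [norm_smul, norm_smul, norm_inv, norm_pow]
    have h1 : ‖(n.factorial : ℂ)‖ = (n.factorial : ℝ) := by
      rw [Complex.norm_natCast]
    have h2 : ‖(x : ℂ) - (t : ℂ)‖ = r := by
      rw [hr, ← Complex.ofReal_sub, Complex.norm_real, Real.norm_eq_abs]
    rw [h1, h2, div_mul_div_comm, Real.mul_self_sqrt (by positivity), inv_mul_eq_div]
  -- Step A : the norm of the sum is bounded by the sum of the norms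
  have hstepA : (‖G x‖₊ : ℝ≥0∞) ≤ ∑' n, a n * b n := by
    rw [← tsum_congr hterm]
    by_cases hs : Summable fun n => ‖φ n‖₊
    · calc (‖G x‖₊ : ℝ≥0∞) = ((‖∑' n, φ n‖₊ : ℝ≥0) : ℝ≥0∞) := by rw [hφ.tsum_eq]
        _ ≤ ((∑' n, ‖φ n‖₊ : ℝ≥0) : ℝ≥0∞) := by exact_mod_cast nnnorm_tsum_le hs
        _ = ∑' n, (‖φ n‖₊ : ℝ≥0∞) := ENNReal.coe_tsum hs
    · have : ∑' n, (‖φ n‖₊ : ℝ≥0∞) = ⊤ := by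
        by_contra h
        exact hs (ENNReal.tsum_coe_ne_top_iff_summable.mp h)
      rw [this]; exact le_top
  -- Step B : Cauchy–Schwarz
  have hCS : ((‖G x‖₊ : ℝ≥0∞)) ^ 2 ≤ (∑' n, a n ^ 2) * (∑' n, b n ^ 2) :=
    le_trans (pow_le_pow_left' hstepA 2) (ennreal_cauchy_schwarz_tsum a b)
  -- Step C : the first factor is `exp ((x - t)^2)`
  have hstepC : (∑' n, a n ^ 2) = ENNReal.ofReal (Real.exp ((x - t) ^ 2)) := by
    have haeq : ∀ n : ℕ, a n ^ 2 = ENNReal.ofReal (((x - t) ^ 2) ^ n / n.factorial) := by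
      intro n
      rw [ha]
      simp only
      rw [← ENNReal.ofReal_pow (by positivity), div_pow, Real.sq_sqrt (by positivity),
        pow_right_comm, hr, sq_abs]
    rw [tsum_congr haeq, ← ENNReal.ofReal_tsum_of_nonneg (fun n => by positivity)
      (Real.summable_pow_div_factorial _)]
    congr 1
    rw [Real.exp_eq_exp_ℝ, NormedSpace.exp_eq_tsum_div]
  -- Step D : the second factor
  have hstepD : (∑' n, b n ^ 2) =
      ∑' ν : ℕ, ((‖iteratedDeriv ν G t‖₊ : ℝ≥0∞)) ^ 2 / (ν.factorial : ℝ≥0∞) := by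
    refine tsum_congr fun n => ?_
    rw [hb]
    simp only
    rw [← ENNReal.ofReal_pow (by positivity), div_pow, Real.sq_sqrt (by positivity),
      ENNReal.ofReal_div_of_pos (by exact_mod_cast n.factorial_pos),
      ENNReal.ofReal_natCast, ENNReal.ofReal_pow (hv0 n), (ofReal_norm _).trans (enorm_eq_nnnorm _)]
  rw [hstepC, hstepD] at hCS
  exact hCS

/-- For `f ∈ B_σ`, an interval `[x_i, x_{i+1}]` of length at most `δ`, and `l ≥ 0`,
`∫_{x_i}^{x_{i+1}} |f⁽ˡ⁾(x_i)|² dx ≤ e^{δ²} Σ_{ν=0}^∞ ∫_{x_i}^{x_{i+1}} |f^{(l+ν)}(x)|²/ν! dx`. -/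
theorem stmt_9 (σ : ℝ) (hσ : 0 < σ) (F : ℂ → ℂ) (hF : BandLimited σ F)
    (δ : ℝ) (hδ : 0 < δ) (xi xi1 : ℝ) (hlt : xi < xi1) (hgap : xi1 - xi ≤ δ) (l : ℕ) :
    ∫⁻ _t in Icc xi xi1, ((‖iteratedDeriv l (fun t : ℝ => F t) xi‖₊ : ℝ≥0∞) ^ 2)
      ≤ ENNReal.ofReal (Real.exp (δ ^ 2)) *
        ∑' ν : ℕ,
          (∫⁻ t in Icc xi xi1, ((‖iteratedDeriv (l + ν) (fun t : ℝ => F t) t‖₊ : ℝ≥0∞) ^ 2)) /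
            (Nat.factorial ν : ℝ≥0∞) := by
  have hF1 : Differentiable ℂ F := hF.1
  -- complex iterated derivatives
  have hGl : ∀ m : ℕ, Differentiable ℂ (iteratedDeriv m F) := by
    intro m
    rw [iteratedDeriv_eq_iterate]
    exact (hF1.contDiff.iterate_deriv m).differentiable (by simp)
  have hcomb : ∀ ν : ℕ, iteratedDeriv ν (iteratedDeriv l F) = iteratedDeriv (l + ν) F := by
    intro ν
    rw [iteratedDeriv_eq_iterate, iteratedDeriv_eq_iterate, iteratedDeriv_eq_iterate,
      add_comm l ν, Function.iterate_add_apply]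
  simp only [iteratedDeriv_comp_ofReal_entire hF1]
  set S : ℝ → ℝ≥0∞ := fun t =>
    ∑' ν : ℕ, ((‖iteratedDeriv (l + ν) F t‖₊ : ℝ≥0∞)) ^ 2 / (ν.factorial : ℝ≥0∞) with hS
  have hpt : ∀ t ∈ Icc xi xi1,
      ((‖iteratedDeriv l F xi‖₊ : ℝ≥0∞)) ^ 2 ≤ ENNReal.ofReal (Real.exp (δ ^ 2)) * S t := by
    intro t ht
    have h1 := pointwise_key (hGl l) xi t
    simp only [hcomb] at h1
    refine h1.trans ?_
    refine mul_le_mul_left (ENNReal.ofReal_le_ofReal (Real.exp_le_exp.mpr ?_)) _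
    have h2 : (xi - t) ^ 2 = (t - xi) ^ 2 := by ring
    rw [h2]
    have h3 : 0 ≤ t - xi := sub_nonneg.mpr ht.1
    have h4 : t - xi ≤ δ := le_trans (by linarith [ht.2]) hgap
    nlinarith
  -- measurability of the summands
  have hmeas : ∀ ν : ℕ, Measurable fun t : ℝ =>
      ((‖iteratedDeriv (l + ν) F t‖₊ : ℝ≥0∞)) ^ 2 / (ν.factorial : ℝ≥0∞) := by
    intro ν
    have hc : Continuous fun t : ℝ => iteratedDeriv (l + ν) F t :=
      ((hGl (l + ν)).continuous).comp Complex.continuous_ofReal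
    exact ((hc.nnnorm.measurable.coe_nnreal_ennreal.pow_const 2).div_const _)
  calc (∫⁻ _t in Icc xi xi1, ((‖iteratedDeriv l F xi‖₊ : ℝ≥0∞)) ^ 2)
      ≤ ∫⁻ t in Icc xi xi1, ENNReal.ofReal (Real.exp (δ ^ 2)) * S t := by
        refine setLIntegral_mono (Measurable.const_mul ?_ _) hpt
        exact Measurable.ennreal_tsum fun ν => hmeas ν
    _ = ENNReal.ofReal (Real.exp (δ ^ 2)) * ∫⁻ t in Icc xi xi1, S t :=
        lintegral_const_mul' _ _ ENNReal.ofReal_ne_top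
    _ = ENNReal.ofReal (Real.exp (δ ^ 2)) * ∑' ν : ℕ, ∫⁻ t in Icc xi xi1,
          ((‖iteratedDeriv (l + ν) F t‖₊ : ℝ≥0∞)) ^ 2 / (ν.factorial : ℝ≥0∞) := by
        rw [hS, lintegral_tsum fun ν => (hmeas ν).aemeasurable]
    _ = ENNReal.ofReal (Real.exp (δ ^ 2)) * ∑' ν : ℕ, (∫⁻ t in Icc xi xi1,
          ((‖iteratedDeriv (l + ν) F t‖₊ : ℝ≥0∞)) ^ 2) / (ν.factorial : ℝ≥0∞) := by
        congr 1
        refine tsum_congr fun ν => ?_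
        simp only [div_eq_mul_inv]
        rw [lintegral_mul_const' _ _ (by simp [Nat.factorial_ne_zero])]
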